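/- For a bow-marking tokeniser with pushforward distribution q, the word-in-context probability satisfies: p(w | w_{<t}) = q(τ(w) | T(w_{<t})) · [Σ_{v ∈ V_bow ∪ {eos}} q(v | T(w_{<t}) ∘ τ(w))] / [Σ_{v ∈ V_bow ∪ {eos}} q(v | T(w_{<t}))], where q(v | x) is the conditional subword probability and q(eos | x) = q(x)/P_q(x ∘ V*), assuming all denominators are positive. -/

import Mathlib

open scoped ENNReal BigOperators

/-- Prefix probability of a sequence under a distribution over sequences. -/
noncomputable def prefP {A : Type*} (p : List A → ℝ≥0∞) (s : List A) : ℝ≥0∞ :=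
  ∑' y : {y : List A // s <+: y}, p y.val

/-- Conditional next-symbol probability. -/
noncomputable def condP {A : Type*} (p : List A → ℝ≥0∞) (v : A) (s : List A) : ℝ≥0∞ :=
  prefP p (s ++ [v]) / prefP p s

/-- Conditional end-of-sequence probability. -/
noncomputable def eosP {A : Type*} (p : List A → ℝ≥0∞) (s : List A) : ℝ≥0∞ :=
  p s / prefP p s

set_option linter.unusedSectionVars false

section AuxStmt11

open scoped Classical

variable {L V : Type*} [DecidableEq V] {Vbow Vmid : Set V} {τ : L → List V}

/-- A list is "good" if it is empty or starts with a bow symbol. -/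
private def GoodL (Vbow : Set V) (A : List V) : Prop := ∀ v r, A = v :: r → v ∈ Vbow

private lemma good_nil : GoodL Vbow ([] : List V) := by intro v r h; cases h

private lemma tok_half (hdisj : Disjoint Vbow Vmid)
    (hshape : ∀ w : L, ∃ v m, v ∈ Vbow ∧ (∀ a ∈ m, a ∈ Vmid) ∧ τ w = v :: m)
    {a b : L} {A B : List V} (hA : GoodL Vbow A)
    (h : τ a ++ A = τ b ++ B) (hlen : (τ a).length ≤ (τ b).length) :
    τ a = τ b ∧ A = B := by
  have h2 : τ a <+: τ b :=
    List.prefix_of_prefix_length_le ⟨A, h⟩ (List.prefix_append _ _) hlen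
  obtain ⟨c, hc⟩ := h2
  cases c with
  | nil =>
    rw [List.append_nil] at hc
    rw [← hc] at h
    exact ⟨hc, List.append_cancel_left h⟩
  | cons d c' =>
    exfalso
    rw [← hc, List.append_assoc] at h
    have hAd : A = d :: (c' ++ B) := List.append_cancel_left h
    have hd : d ∈ Vbow := hA d _ hAd
    obtain ⟨v, m, hv, hm, hτa⟩ := hshape a
    obtain ⟨v', m', hv', hm', hτb⟩ := hshape b
    rw [hτa, hτb, List.cons_append] at hc
    have hm'' : m' = m ++ d :: c' := by
      injection hc with h1 h2; exact h2.symm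
    have : d ∈ Vmid := hm' d (by rw [hm'']; simp)
    exact Set.disjoint_left.mp hdisj hd this

private lemma tok_eq (hdisj : Disjoint Vbow Vmid)
    (hshape : ∀ w : L, ∃ v m, v ∈ Vbow ∧ (∀ a ∈ m, a ∈ Vmid) ∧ τ w = v :: m)
    {a b : L} {A B : List V} (hA : GoodL Vbow A) (hB : GoodL Vbow B)
    (h : τ a ++ A = τ b ++ B) : τ a = τ b ∧ A = B := by
  rcases le_total (τ a).length (τ b).length with hl | hl
  · exact tok_half hdisj hshape hA h hl
  · obtain ⟨h1, h2⟩ := tok_half hdisj hshape hB h.symm hl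
    exact ⟨h1.symm, h2.symm⟩

private lemma good_flatten
    (hshape : ∀ w : L, ∃ v m, v ∈ Vbow ∧ (∀ a ∈ m, a ∈ Vmid) ∧ τ w = v :: m)
    (s : List L) (A : List V) (hA : GoodL Vbow A) :
    GoodL Vbow ((s.map τ).flatten ++ A) := by
  intro v r h
  cases s with
  | nil => exact hA v r (by simpa using h)
  | cons c s' =>
    obtain ⟨v0, m, hv0, hm, hc⟩ := hshape c
    rw [List.map_cons, List.flatten_cons, hc, List.cons_append, List.cons_append] at h
    injection h with h1 _
    exact h1 ▸ hv0

/-- Key structural lemma: a flattened token string extending `T s` by a good list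
comes from a word-list extending `s`. -/
private lemma flatten_split (hdisj : Disjoint Vbow Vmid) (hτ : Function.Injective τ)
    (hshape : ∀ w : L, ∃ v m, v ∈ Vbow ∧ (∀ a ∈ m, a ∈ Vmid) ∧ τ w = v :: m) :
    ∀ (s u : List L) (A : List V), GoodL Vbow A →
      (u.map τ).flatten = (s.map τ).flatten ++ A →
      ∃ u', u = s ++ u' ∧ (u'.map τ).flatten = A := by
  intro s
  induction s with
  | nil => intro u A _ h; exact ⟨u, by simp, by simpa using h⟩
  | cons a s' ih =>
    intro u A hA h
    cases u with
    | nil =>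
      exfalso
      obtain ⟨v0, m, _, _, hc⟩ := hshape a
      simp [hc] at h
    | cons b u' =>
      rw [List.map_cons, List.flatten_cons, List.map_cons, List.flatten_cons,
        List.append_assoc] at h
      have hGu' : GoodL Vbow ((u'.map τ).flatten) := by
        have := good_flatten hshape u' [] good_nil
        simpa using this
      have hGs : GoodL Vbow ((s'.map τ).flatten ++ A) := good_flatten hshape s' A hA
      obtain ⟨heq, hrest⟩ := tok_eq hdisj hshape hGu' hGs h
      have hab : b = a := hτ heq
      subst hab
      obtain ⟨u'', rfl, hA'⟩ := ih u' A hA hrest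
      exact ⟨u'', rfl, hA'⟩

private lemma prefP_eq_tsum_ind {A : Type*} (p : List A → ℝ≥0∞) (s : List A) :
    prefP p s = ∑' u : List A, p u * (if s <+: u then 1 else 0) := by
  rw [prefP]
  rw [show (∑' y : {y : List A // s <+: y}, p y.val)
      = ∑' y : {y : List A | s <+: y}, p y.val from rfl, tsum_subtype]
  refine tsum_congr fun u => ?_
  by_cases h : s <+: u <;> simp [Set.indicator, h]

private lemma prefP_le_one {A : Type*} {p : List A → ℝ≥0∞} (hp : ∑' u : List A, p u = 1)
    (s : List A) : prefP p s ≤ 1 := by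
  calc prefP p s ≤ ∑' u : List A, p u := by
        rw [prefP_eq_tsum_ind]
        refine ENNReal.tsum_le_tsum fun u => ?_
        by_cases h : s <+: u
        · rw [if_pos h, mul_one]
        · rw [if_neg h, mul_zero]; exact zero_le
    _ = 1 := hp

variable {p : List L → ℝ≥0∞} {q : List V → ℝ≥0∞}

private lemma prefP_q_eq
    (hq : ∀ x : List V, q x = ∑' u : List L, p u * (if x = (u.map τ).flatten then 1 else 0))
    (x : List V) :
    prefP q x = ∑' u : List L, p u * (if x <+: (u.map τ).flatten then 1 else 0) := by
  rw [prefP]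
  calc ∑' y : {y : List V // x <+: y}, q y.val
      = ∑' (y : {y : List V // x <+: y}) (u : List L),
          p u * (if y.val = (u.map τ).flatten then 1 else 0) :=
        tsum_congr fun y => hq y.val
    _ = ∑' (u : List L) (y : {y : List V // x <+: y}),
          p u * (if y.val = (u.map τ).flatten then 1 else 0) := ENNReal.tsum_comm
    _ = ∑' u : List L, p u * (if x <+: (u.map τ).flatten then 1 else 0) := by
        refine tsum_congr fun u => ?_
        rw [ENNReal.tsum_mul_left]
        congr 1
        by_cases h : x <+: (u.map τ).flatten
        · rw [if_pos h,
            tsum_eq_single (⟨(u.map τ).flatten, h⟩ : {y : List V // x <+: y})]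
          · simp
          · intro y hy
            rw [if_neg]
            exact fun hc => hy (Subtype.ext hc)
        · rw [if_neg h, ENNReal.tsum_eq_zero]
          intro y
          rw [if_neg]
          exact fun hc => h (hc ▸ y.2)

private lemma prefP_q_le_one
    (hp : ∑' u : List L, p u = 1)
    (hq : ∀ x : List V, q x = ∑' u : List L, p u * (if x = (u.map τ).flatten then 1 else 0))
    (x : List V) : prefP q x ≤ 1 := by
  calc prefP q x ≤ ∑' u : List L, p u := by
        rw [prefP_q_eq hq]
        refine ENNReal.tsum_le_tsum fun u => ?_
        by_cases h : x <+: (u.map τ).flatten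
        · rw [if_pos h, mul_one]
        · rw [if_neg h, mul_zero]; exact zero_le
    _ = 1 := hp

/-- Per-word indicator identity. -/
private lemma key_ind
    (hshape : ∀ w : L, ∃ v m, v ∈ Vbow ∧ (∀ a ∈ m, a ∈ Vmid) ∧ τ w = v :: m)
    (hsplit : ∀ (s u : List L) (A : List V), GoodL Vbow A →
      (u.map τ).flatten = (s.map τ).flatten ++ A →
      ∃ u', u = s ++ u' ∧ (u'.map τ).flatten = A)
    (s u : List L) :
    ((if (s.map τ).flatten = (u.map τ).flatten then (1 : ℝ≥0∞) else 0) +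
      ∑' v : Vbow, (if (s.map τ).flatten ++ [v.val] <+: (u.map τ).flatten
        then (1 : ℝ≥0∞) else 0))
      = if s <+: u then 1 else 0 := by
  by_cases hsu : s <+: u
  · rw [if_pos hsu]
    obtain ⟨c, rfl⟩ := hsu
    cases c with
    | nil =>
      rw [List.append_nil, if_pos rfl]
      have h0 : ∑' v : Vbow, (if (s.map τ).flatten ++ [v.val] <+: (s.map τ).flatten
          then (1 : ℝ≥0∞) else 0) = 0 := by
        rw [ENNReal.tsum_eq_zero]
        intro v
        rw [if_neg]
        intro hpre
        have := hpre.length_le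
        simp at this
      rw [h0, add_zero]
    | cons d c' =>
      obtain ⟨v0, m, hv0, hm, hd⟩ := hshape d
      have hTu : ((s ++ d :: c').map τ).flatten
          = (s.map τ).flatten ++ (v0 :: (m ++ ((c'.map τ).flatten))) := by
        rw [List.map_append, List.flatten_append, List.map_cons, List.flatten_cons, hd]
        simp
      have hne : (if (s.map τ).flatten = ((s ++ d :: c').map τ).flatten
          then (1 : ℝ≥0∞) else 0) = 0 := by
        rw [if_neg]
        intro hEq
        have := congrArg List.length hEq
        rw [hTu] at this
        simp at this
      have h2 : (s.map τ).flatten ++ [v0] <+: ((s ++ d :: c').map τ).flatten :=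
        ⟨m ++ ((c'.map τ).flatten), by rw [hTu]; simp⟩
      have hsum : ∑' v : Vbow, (if (s.map τ).flatten ++ [v.val] <+:
          ((s ++ d :: c').map τ).flatten then (1 : ℝ≥0∞) else 0) = 1 := by
        rw [tsum_eq_single (⟨v0, hv0⟩ : Vbow)]
        · rw [if_pos h2]
        · intro v hv
          rw [if_neg]
          intro hpre
          have h3 := List.prefix_of_prefix_length_le hpre h2 (by simp)
          have h4 := h3.eq_of_length (by simp)
          have hvv : v.val = v0 := by simpa using h4
          exact hv (Subtype.ext hvv)
      rw [hne, hsum, zero_add]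
  · rw [if_neg hsu]
    have h1 : (if (s.map τ).flatten = (u.map τ).flatten then (1 : ℝ≥0∞) else 0) = 0 := by
      rw [if_neg]
      intro hEq
      obtain ⟨u', rfl, hu'⟩ := hsplit s u [] (by intro v r h; cases h) (by simp [hEq.symm])
      exact hsu ⟨u', rfl⟩
    have h2 : ∑' v : Vbow, (if (s.map τ).flatten ++ [v.val] <+: (u.map τ).flatten
        then (1 : ℝ≥0∞) else 0) = 0 := by
      rw [ENNReal.tsum_eq_zero]
      intro v
      rw [if_neg]
      intro hpre
      obtain ⟨r, hr⟩ := hpre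
      have hGood : GoodL Vbow (v.val :: r) := by
        intro v' r' h; injection h with h1 _; exact h1 ▸ v.2
      obtain ⟨u', rfl, -⟩ := hsplit s u (v.val :: r) hGood (by rw [← hr]; simp)
      exact hsu ⟨u', rfl⟩
    rw [h1, h2, add_zero]

/-- The total-mass identity: `q (T s) + ∑ over bow symbols of prefP q (T s ++ [v])`
equals the word-level prefix probability. -/
private lemma mass_eq
    (hshape : ∀ w : L, ∃ v m, v ∈ Vbow ∧ (∀ a ∈ m, a ∈ Vmid) ∧ τ w = v :: m)
    (hsplit : ∀ (s u : List L) (A : List V), GoodL Vbow A →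
      (u.map τ).flatten = (s.map τ).flatten ++ A →
      ∃ u', u = s ++ u' ∧ (u'.map τ).flatten = A)
    (hq : ∀ x : List V, q x = ∑' u : List L, p u * (if x = (u.map τ).flatten then 1 else 0))
    (s : List L) :
    q ((s.map τ).flatten) + ∑' v : Vbow, prefP q ((s.map τ).flatten ++ [v.val])
      = prefP p s := by
  rw [prefP_eq_tsum_ind p s, hq]
  have h1 : (∑' v : Vbow, prefP q ((s.map τ).flatten ++ [v.val]))
      = ∑' (u : List L) (v : Vbow),
          p u * (if (s.map τ).flatten ++ [v.val] <+: (u.map τ).flatten then 1 else 0) := by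
    rw [show (∑' v : Vbow, prefP q ((s.map τ).flatten ++ [v.val]))
        = ∑' (v : Vbow) (u : List L),
            p u * (if (s.map τ).flatten ++ [v.val] <+: (u.map τ).flatten then 1 else 0)
      from tsum_congr fun v => prefP_q_eq hq _]
    exact ENNReal.tsum_comm
  rw [h1, ← ENNReal.tsum_add]
  refine tsum_congr fun u => ?_
  rw [ENNReal.tsum_mul_left, ← mul_add, key_ind hshape hsplit s u]

private lemma prod_div_telescope (a : ℕ → ℝ≥0∞) (h0 : ∀ k, a k ≠ 0) (ht : ∀ k, a k ≠ ⊤)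
    (n : ℕ) : ∏ i ∈ Finset.range n, a (i + 1) / a i = a n / a 0 := by
  induction n with
  | zero => simp [ENNReal.div_self (h0 0) (ht 0)]
  | succ n ih =>
    rw [Finset.prod_range_succ, ih, div_eq_mul_inv, div_eq_mul_inv, div_eq_mul_inv]
    calc a n * (a 0)⁻¹ * (a (n + 1) * (a n)⁻¹)
        = a n * (a n)⁻¹ * (a (n + 1) * (a 0)⁻¹) := by ring
      _ = a (n + 1) * (a 0)⁻¹ := by
          rw [ENNReal.mul_inv_cancel (h0 n) (ht n), one_mul]

private lemma ennreal_cancel {x y z : ℝ≥0∞} (hx0 : x ≠ 0) (hxt : x ≠ ⊤) :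
    x / z * (y / x) = y / z := by
  rw [div_eq_mul_inv, div_eq_mul_inv, div_eq_mul_inv]
  calc x * z⁻¹ * (y * x⁻¹) = x * x⁻¹ * (y * z⁻¹) := by ring
    _ = y * z⁻¹ := by rw [ENNReal.mul_inv_cancel hx0 hxt, one_mul]

private lemma ennreal_div_div {x y z : ℝ≥0∞} (hy0 : y ≠ 0) (hyt : y ≠ ⊤)
    (hz0 : z ≠ 0) (hzt : z ≠ ⊤) :
    (x / z) / (y / z) = x / y := by
  rw [div_eq_mul_inv x z, div_eq_mul_inv y z, div_eq_mul_inv,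
    ENNReal.mul_inv (Or.inl hy0) (Or.inl hyt), inv_inv]
  calc x * z⁻¹ * (y⁻¹ * z) = z * z⁻¹ * (x * y⁻¹) := by ring
    _ = x * y⁻¹ := by rw [ENNReal.mul_inv_cancel hz0 hzt, one_mul]
    _ = x / y := (div_eq_mul_inv x y).symm

end AuxStmt11

theorem stmt_11 {L V : Type*} [Countable L] [Countable V] [DecidableEq V] (Vbow Vmid : Set V)
    (hdisj : Disjoint Vbow Vmid) (hcover : Vbow ∪ Vmid = Set.univ)
    (τ : L → List V) (hτ : Function.Injective τ)
    (hshape : ∀ w : L, ∃ (v : V) (m : List V),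
      v ∈ Vbow ∧ (∀ a ∈ m, a ∈ Vmid) ∧ τ w = v :: m)
    (p : List L → ℝ≥0∞) (hp : ∑' u : List L, p u = 1)
    (q : List V → ℝ≥0∞)
    (hq : ∀ x : List V, q x = ∑' u : List L, p u * (if x = (u.map τ).flatten then 1 else 0))
    (wlt : List L) (w : L)
    (hposw : prefP p wlt ≠ 0)
    (hposq : ∀ s : List V, s <+: τ w → prefP q ((wlt.map τ).flatten ++ s) ≠ 0)
    (hden : eosP q ((wlt.map τ).flatten) +
      ∑' v : Vbow, condP q v.val ((wlt.map τ).flatten) ≠ 0) :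
    prefP p (wlt ++ [w]) / prefP p wlt =
      (∏ i : Fin (τ w).length,
        condP q ((τ w).get i) ((wlt.map τ).flatten ++ (τ w).take i)) *
      (eosP q ((wlt.map τ).flatten ++ τ w) +
        ∑' v : Vbow, condP q v.val ((wlt.map τ).flatten ++ τ w)) /
      (eosP q ((wlt.map τ).flatten) +
        ∑' v : Vbow, condP q v.val ((wlt.map τ).flatten)) := by
  classical
  have hsplit := flatten_split hdisj hτ hshape
  set X := (wlt.map τ).flatten with hX
  have hYX : ((wlt ++ [w]).map τ).flatten = X ++ τ w := by
    rw [hX]; simp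
  have hqt : ∀ x, prefP q x ≠ ⊤ := fun x =>
    (lt_of_le_of_lt (prefP_q_le_one hp hq x) (by norm_num)).ne
  have hQx0 : prefP q X ≠ 0 := by
    have := hposq [] List.nil_prefix
    simpa using this
  have hQy0 : prefP q (X ++ τ w) ≠ 0 := hposq (τ w) (List.prefix_refl _)
  have hPt : prefP p wlt ≠ ⊤ :=
    (lt_of_le_of_lt (prefP_le_one hp wlt) (by norm_num)).ne
  -- bracket terms
  have hbr : ∀ s : List L,
      eosP q ((s.map τ).flatten) + ∑' v : Vbow, condP q v.val ((s.map τ).flatten)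
        = prefP p s / prefP q ((s.map τ).flatten) := by
    intro s
    rw [eosP]
    simp only [condP, div_eq_mul_inv]
    rw [ENNReal.tsum_mul_right, ← add_mul, mass_eq hshape hsplit hq s]
  have hbrX : eosP q X + ∑' v : Vbow, condP q v.val X = prefP p wlt / prefP q X := by
    have := hbr wlt
    rw [← hX] at this
    exact this
  have hbrY : eosP q (X ++ τ w) + ∑' v : Vbow, condP q v.val (X ++ τ w)
      = prefP p (wlt ++ [w]) / prefP q (X ++ τ w) := by
    have := hbr (wlt ++ [w])
    rw [hYX] at this
    exact this
  -- telescoping product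
  have hprod : (∏ i : Fin (τ w).length, condP q ((τ w).get i) (X ++ (τ w).take i))
      = prefP q (X ++ τ w) / prefP q X := by
    set a : ℕ → ℝ≥0∞ := fun k => prefP q (X ++ (τ w).take k) with ha
    have h0 : ∀ k, a k ≠ 0 := fun k => hposq _ (List.take_prefix _ _)
    have hT : ∀ k, a k ≠ ⊤ := fun k => hqt _
    have hstep : ∀ i : Fin (τ w).length,
        condP q ((τ w).get i) (X ++ (τ w).take i) = a (↑i + 1) / a ↑i := by
      intro i
      rw [condP]
      congr 1
      rw [List.append_assoc]
      congr 1
      rw [List.get_eq_getElem, ← List.concat_eq_append, List.take_concat_get]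
    calc (∏ i : Fin (τ w).length, condP q ((τ w).get i) (X ++ (τ w).take i))
        = ∏ i : Fin (τ w).length, a (↑i + 1) / a ↑i :=
          Finset.prod_congr rfl fun i _ => hstep i
      _ = ∏ i ∈ Finset.range (τ w).length, a (i + 1) / a i :=
          Fin.prod_univ_eq_prod_range (fun k => a (k + 1) / a k) _
      _ = a (τ w).length / a 0 := prod_div_telescope a h0 hT _
      _ = prefP q (X ++ τ w) / prefP q X := by
          rw [ha]; simp
  rw [hprod, hbrX, hbrY, ennreal_cancel hQy0 (hqt _)]
  exact (ennreal_div_div hposw hPt hQx0 (hqt _)).symm
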